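/- Let n ≥ 1, let P be a finite set, let q : P → {0,1,…,n}, and let σ : P → {1,-1}. Suppose that for every i with 0 ≤ i ≤ n-1, ∑_{p∈P} σ(p) (-1)^{q(p)} e_i(1,…,1 (n-q(p) times), -1,…,-1 (q(p) times)) = 0, where e_i is the i-th elementary symmetric polynomial in n variables. Then for every i with 0 ≤ i ≤ n-1, ∑_{p∈P} σ(p) (-1)^{q(p)} q(p)^i = 0. -/

import Mathlib

open Multiset Polynomial Finset

private lemma my_esymm_zero (s : Multiset ℚ) : s.esymm 0 = 1 := by
  simp [Multiset.esymm]

private lemma my_esymm_cons (x : ℚ) (s : Multiset ℚ) (k : ℕ) :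
    (x ::ₘ s).esymm (k+1) = s.esymm (k+1) + x * s.esymm k := by
  simp [Multiset.esymm, Multiset.powersetCard_cons, Multiset.map_map, Function.comp,
    Multiset.sum_map_mul_left]

private lemma my_esymm_rep_one (b i : ℕ) :
    (Multiset.replicate b (1:ℚ)).esymm i = b.choose i := by
  induction b generalizing i with
  | zero =>
    cases i with
    | zero => simp [my_esymm_zero]
    | succ i => simp [Multiset.esymm, Multiset.powersetCard_zero_right]
  | succ b ih =>
    cases i with
    | zero => simp [my_esymm_zero]
    | succ i =>
      rw [Multiset.replicate_succ, my_esymm_cons, ih, ih, one_mul,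
        Nat.choose_succ_succ' b i]
      push_cast
      ring

private lemma my_esymm_rep_neg (b i : ℕ) :
    (Multiset.replicate b (-1:ℚ)).esymm i = (-1)^i * b.choose i := by
  have h : (Multiset.replicate b (-1:ℚ)) = Multiset.map Neg.neg (Multiset.replicate b 1) := by
    simp
  rw [h, Multiset.esymm_neg, my_esymm_rep_one]

private lemma my_esymm_rep (a b i : ℕ) :
    (Multiset.replicate a (1:ℚ) + Multiset.replicate b (-1)).esymm i
      = ∑ j ∈ Finset.range (i+1), (a.choose (i-j) : ℚ) * (b.choose j) * (-1)^j := by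
  induction a generalizing i with
  | zero =>
    rw [Multiset.replicate_zero, zero_add, my_esymm_rep_neg,
      Finset.sum_eq_single i]
    · simp [mul_comm]
    · intro j hj hne
      have : i - j ≠ 0 := by
        rw [Finset.mem_range] at hj
        omega
      simp [Nat.choose_eq_zero_of_lt (by omega : (0:ℕ) < i - j), this]
    · simp
  | succ a ih =>
    have h : Multiset.replicate (a+1) (1:ℚ) + Multiset.replicate b (-1)
        = 1 ::ₘ (Multiset.replicate a 1 + Multiset.replicate b (-1)) := by
      rw [Multiset.replicate_succ, Multiset.cons_add]
    cases i with
    | zero =>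
      rw [h, my_esymm_zero]
      simp
    | succ i =>
      rw [h, my_esymm_cons, ih, ih, one_mul, Finset.sum_range_succ,
        Finset.sum_range_succ (n := i+1)]
      have key : ∀ j ∈ Finset.range (i+1),
          ((a+1).choose (i+1-j) : ℚ) * (b.choose j) * (-1)^j
          = (a.choose (i+1-j) : ℚ) * (b.choose j) * (-1)^j
            + (a.choose (i-j) : ℚ) * (b.choose j) * (-1)^j := by
        intro j hj
        rw [Finset.mem_range] at hj
        have h1 : i + 1 - j = (i - j) + 1 := by omega
        rw [h1, Nat.choose_succ_succ' a (i-j)]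
        push_cast
        ring
      rw [Finset.sum_congr rfl key, Finset.sum_add_distrib]
      simp
      ring

noncomputable def myQ (n i : ℕ) : Polynomial ℚ :=
  ∑ j ∈ Finset.range (i+1), Polynomial.C ((-1:ℚ)^j / (((i-j).factorial : ℚ) * (j.factorial : ℚ))) *
    ((descPochhammer ℚ (i-j)).comp (Polynomial.C (n:ℚ) - Polynomial.X) * descPochhammer ℚ j)

private lemma myQ_eval (n i m : ℕ) (hm : m ≤ n) :
    (myQ n i).eval (m:ℚ)
      = (Multiset.replicate (n-m) (1:ℚ) + Multiset.replicate m (-1)).esymm i := by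
  rw [my_esymm_rep, myQ, Polynomial.eval_finset_sum]
  refine Finset.sum_congr rfl fun j hj => ?_
  rw [Polynomial.eval_mul, Polynomial.eval_mul, Polynomial.eval_comp]
  simp only [Polynomial.eval_C, Polynomial.eval_sub, Polynomial.eval_X]
  have h1 : (n:ℚ) - m = ((n-m : ℕ) : ℚ) := by
    rw [Nat.cast_sub hm]
  rw [h1, descPochhammer_eval_eq_descFactorial, descPochhammer_eval_eq_descFactorial,
    Nat.descFactorial_eq_factorial_mul_choose, Nat.descFactorial_eq_factorial_mul_choose]
  have h2 : ((i-j).factorial : ℚ) ≠ 0 := Nat.cast_ne_zero.mpr (Nat.factorial_ne_zero _)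
  have h3 : (j.factorial : ℚ) ≠ 0 := Nat.cast_ne_zero.mpr (Nat.factorial_ne_zero _)
  push_cast
  field_simp

private lemma myQ_natDegree_le (n i : ℕ) : (myQ n i).natDegree ≤ i := by
  refine (Polynomial.natDegree_sum_le _ _).trans ?_
  rw [Finset.fold_max_le]
  refine ⟨Nat.zero_le _, fun j hj => ?_⟩
  rw [Finset.mem_range] at hj
  refine (Polynomial.natDegree_C_mul_le _ _).trans ?_
  refine (Polynomial.natDegree_mul_le).trans ?_
  have hc : ((descPochhammer ℚ (i-j)).comp (Polynomial.C (n:ℚ) - Polynomial.X)).natDegree ≤ i - j := by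
    refine (Polynomial.natDegree_comp_le).trans ?_
    have : (Polynomial.C (n:ℚ) - Polynomial.X).natDegree ≤ 1 := by
      refine (Polynomial.natDegree_sub_le _ _).trans ?_
      simp
    calc (descPochhammer ℚ (i-j)).natDegree * (Polynomial.C (n:ℚ) - Polynomial.X).natDegree
        ≤ (descPochhammer ℚ (i-j)).natDegree * 1 := Nat.mul_le_mul_left _ this
      _ = i - j := by rw [mul_one, descPochhammer_natDegree]
  have hd : (descPochhammer ℚ j).natDegree ≤ j := le_of_eq (descPochhammer_natDegree (R := ℚ) j)
  omega

private lemma myQ_coeff_ne (n i : ℕ) : (myQ n i).coeff i ≠ 0 := by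
  have hdeg1 : (Polynomial.C (n:ℚ) - Polynomial.X).natDegree = 1 := by
    have : Polynomial.C (n:ℚ) - Polynomial.X = -(Polynomial.X - Polynomial.C (n:ℚ)) := by ring
    rw [this, Polynomial.natDegree_neg, Polynomial.natDegree_X_sub_C]
  have hlc1 : (Polynomial.C (n:ℚ) - Polynomial.X).leadingCoeff = -1 := by
    have : Polynomial.C (n:ℚ) - Polynomial.X = -(Polynomial.X - Polynomial.C (n:ℚ)) := by ring
    rw [this, Polynomial.leadingCoeff_neg, (Polynomial.monic_X_sub_C _).leadingCoeff]
  have key : ∀ j ∈ Finset.range (i+1),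
      (Polynomial.C ((-1:ℚ)^j / (((i-j).factorial : ℚ) * (j.factorial : ℚ))) *
        ((descPochhammer ℚ (i-j)).comp (Polynomial.C (n:ℚ) - Polynomial.X) *
          descPochhammer ℚ j)).coeff i
      = (-1:ℚ)^i / (((i-j).factorial : ℚ) * (j.factorial : ℚ)) := by
    intro j hj
    rw [Finset.mem_range] at hj
    have hdc : ((descPochhammer ℚ (i-j)).comp
        (Polynomial.C (n:ℚ) - Polynomial.X)).natDegree = i - j := by
      rw [Polynomial.natDegree_comp, hdeg1, descPochhammer_natDegree, mul_one]
    have hlcc : ((descPochhammer ℚ (i-j)).comp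
        (Polynomial.C (n:ℚ) - Polynomial.X)).leadingCoeff = (-1:ℚ)^(i-j) := by
      rw [Polynomial.leadingCoeff_comp (by rw [hdeg1]; exact one_ne_zero), hlc1,
        (monic_descPochhammer ℚ (i-j)).leadingCoeff, descPochhammer_natDegree, one_mul]
    have hprod := Polynomial.coeff_mul_degree_add_degree
      ((descPochhammer ℚ (i-j)).comp (Polynomial.C (n:ℚ) - Polynomial.X)) (descPochhammer ℚ j)
    rw [hdc, descPochhammer_natDegree, hlcc, (monic_descPochhammer ℚ j).leadingCoeff,
      mul_one, Nat.sub_add_cancel (by omega)] at hprod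
    rw [Polynomial.coeff_C_mul, hprod]
    have : (-1:ℚ)^(i-j) * (-1:ℚ)^j = (-1:ℚ)^i := by
      rw [← pow_add]; congr 1; omega
    rw [div_mul_eq_mul_div, mul_comm ((-1:ℚ)^j), this]
  rw [myQ, Polynomial.finset_sum_coeff, Finset.sum_congr rfl key]
  have hpos : 0 < ∑ j ∈ Finset.range (i+1), 1 / (((i-j).factorial : ℚ) * (j.factorial : ℚ)) := by
    apply Finset.sum_pos
    · intro j _
      positivity
    · exact ⟨0, Finset.mem_range.mpr (Nat.succ_pos i)⟩
  have hne : ∑ j ∈ Finset.range (i+1),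
      (-1:ℚ)^i / (((i-j).factorial : ℚ) * (j.factorial : ℚ))
      = (-1:ℚ)^i * ∑ j ∈ Finset.range (i+1),
        1 / (((i-j).factorial : ℚ) * (j.factorial : ℚ)) := by
    rw [Finset.mul_sum]
    exact Finset.sum_congr rfl fun j _ => by ring
  rw [hne]
  exact mul_ne_zero (pow_ne_zero _ (by norm_num)) (ne_of_gt hpos)

/-- Let `n ≥ 1`, `P` a finite set, `q : P → {0,…,n}`, `σ : P → {±1}`. If for every
`0 ≤ i ≤ n-1` the ABBV identity
`∑_{p∈P} σ(p) (-1)^{q(p)} e_i(1,…,1 (n-q(p) times), -1,…,-1 (q(p) times)) = 0` holds,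
then `∑_{p∈P} σ(p) (-1)^{q(p)} q(p)^i = 0` for every `0 ≤ i ≤ n-1`. -/
theorem stmt_7 (n : ℕ) (hn : 1 ≤ n) (P : Type*) [Fintype P]
    (q : P → ℕ) (hq : ∀ p, q p ≤ n) (σ : P → ℤ) (hσ : ∀ p, σ p = 1 ∨ σ p = -1)
    (habbv : ∀ i < n, ∑ p : P, (σ p : ℚ) * (-1 : ℚ) ^ (q p) *
      (Multiset.replicate (n - q p) (1 : ℚ) + Multiset.replicate (q p) (-1 : ℚ)).esymm i = 0) :
    ∀ i < n, ∑ p : P, (σ p : ℚ) * (-1 : ℚ) ^ (q p) * (q p : ℚ) ^ i = 0 := by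
  intro i
  induction i using Nat.strong_induction_on with
  | _ i IH =>
    intro hi
    have h0 := habbv i hi
    have he : ∀ p : P,
        (Multiset.replicate (n - q p) (1:ℚ) + Multiset.replicate (q p) (-1)).esymm i
          = (myQ n i).eval ((q p : ℚ)) := fun p => (myQ_eval n i (q p) (hq p)).symm
    have hev : ∀ p : P, (myQ n i).eval ((q p : ℚ))
        = ∑ k ∈ Finset.range (i+1), (myQ n i).coeff k * (q p : ℚ)^k := fun p =>
      Polynomial.eval_eq_sum_range' (lt_of_le_of_lt (myQ_natDegree_le n i) (Nat.lt_succ_self i)) _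
    have h1 : ∑ p : P, (σ p : ℚ) * (-1 : ℚ) ^ (q p) *
        (Multiset.replicate (n - q p) (1 : ℚ) + Multiset.replicate (q p) (-1 : ℚ)).esymm i
        = ∑ k ∈ Finset.range (i+1), (myQ n i).coeff k *
            ∑ p : P, (σ p : ℚ) * (-1 : ℚ) ^ (q p) * (q p : ℚ)^k := by
      calc ∑ p : P, (σ p : ℚ) * (-1 : ℚ) ^ (q p) *
            (Multiset.replicate (n - q p) (1 : ℚ) + Multiset.replicate (q p) (-1 : ℚ)).esymm i
          = ∑ p : P, ∑ k ∈ Finset.range (i+1),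
              (myQ n i).coeff k * ((σ p : ℚ) * (-1 : ℚ) ^ (q p) * (q p : ℚ)^k) := by
            refine Finset.sum_congr rfl fun p _ => ?_
            rw [he p, hev p, Finset.mul_sum]
            exact Finset.sum_congr rfl fun k _ => by ring
        _ = ∑ k ∈ Finset.range (i+1), ∑ p : P,
              (myQ n i).coeff k * ((σ p : ℚ) * (-1 : ℚ) ^ (q p) * (q p : ℚ)^k) :=
            Finset.sum_comm
        _ = ∑ k ∈ Finset.range (i+1), (myQ n i).coeff k *
              ∑ p : P, (σ p : ℚ) * (-1 : ℚ) ^ (q p) * (q p : ℚ)^k :=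
            Finset.sum_congr rfl fun k _ => (Finset.mul_sum _ _ _).symm
    rw [h1, Finset.sum_range_succ] at h0
    have hz : ∑ k ∈ Finset.range i, (myQ n i).coeff k *
        ∑ p : P, (σ p : ℚ) * (-1 : ℚ) ^ (q p) * (q p : ℚ)^k = 0 :=
      Finset.sum_eq_zero fun k hk => by
        rw [IH k (Finset.mem_range.mp hk) (lt_trans (Finset.mem_range.mp hk) hi), mul_zero]
    rw [hz, zero_add] at h0
    exact (mul_eq_zero.mp h0).resolve_left (myQ_coeff_ne n i)
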